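/- If x = Σ_{i∈F} c_i e_i is an (n, ε)-basic special convex combination and G ⊂ F with G ∈ S_k ∗ A_3 for some k < n, then Σ_{i∈G} c_i < 3ε. -/

import Mathlib

/-- `A < B`: every element of `A` is less than every element of `B`. -/
def BlockLt (A B : Finset ℕ) : Prop := ∀ a ∈ A, ∀ b ∈ B, a < b

/-- The Schreier families, defined inductively. -/
def Schreier : ℕ → Set (Finset ℕ)
  | 0 => {F | ∃ i : ℕ, F = {i}}
  | n + 1 => {F | ∃ L : List (Finset ℕ), L ≠ [] ∧
      (∀ A ∈ L, A ∈ Schreier n) ∧ L.Chain' BlockLt ∧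
      (∀ a ∈ L.headI, L.length ≤ a) ∧ F = L.foldr (· ∪ ·) ∅}

/-- The family `S_n ∗ A_3`. -/
def SchreierA3 (n : ℕ) : Set (Finset ℕ) :=
  {F | ∃ L : List (Finset ℕ), L ≠ [] ∧
      (∀ A ∈ L, A.Nonempty ∧ A.card ≤ 3) ∧ L.Chain' BlockLt ∧
      (L.map fun A => sInf (A : Set ℕ)).toFinset ∈ Schreier n ∧
      F = L.foldr (· ∪ ·) ∅}

/-- `Σ_{i∈F} c i • e i` is an `(n, ε)`-basic special convex combination. -/
def IsBasicSCC (n : ℕ) (ε : ℝ) (F : Finset ℕ) (c : ℕ → ℝ) : Prop :=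
  F ∈ Schreier n ∧ (∀ i ∈ F, 0 ≤ c i) ∧ (∑ i ∈ F, c i) = 1 ∧
    ∀ G ⊆ F, G ∈ Schreier (n - 1) → (∑ i ∈ G, c i) < ε

lemma mem_foldr {L : List (Finset ℕ)} {a : ℕ} :
    a ∈ L.foldr (· ∪ ·) ∅ ↔ ∃ A ∈ L, a ∈ A := by
  induction L with
  | nil => simp
  | cons B T ih => simp [ih]

lemma headI_mem {α : Type*} [Inhabited α] {l : List α} (h : l ≠ []) : l.headI ∈ l := by
  cases l with
  | nil => exact absurd rfl h
  | cons a t => simp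

lemma chain_forall : ∀ (T : List (Finset ℕ)) (A : Finset ℕ), (∀ B ∈ T, B.Nonempty) →
    List.Chain BlockLt A T → ∀ B ∈ T, BlockLt A B := by
  intro T
  induction T with
  | nil => simp
  | cons C T' ih =>
    intro A hne hch B hB
    change List.IsChain BlockLt (A :: C :: T') at hch
    rw [List.chain_cons] at hch
    rcases List.mem_cons.1 hB with rfl | hB'
    · exact hch.1
    · obtain ⟨c, hc⟩ := hne C (by simp)
      have h2 := ih C (fun B h => hne B (by simp [h])) hch.2 B hB'
      exact fun a ha b hb => lt_trans (hch.1 a ha c hc) (h2 c hc b hb)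

lemma chain'_pairwise : ∀ (L : List (Finset ℕ)), (∀ A ∈ L, A.Nonempty) →
    L.Chain' BlockLt → L.Pairwise BlockLt := by
  intro L
  induction L with
  | nil => simp
  | cons A T ih =>
    intro hne h
    have hch : List.Chain BlockLt A T := h
    exact List.Pairwise.cons
      (chain_forall T A (fun B hB => hne B (by simp [hB])) hch)
      (ih (fun B hB => hne B (by simp [hB])) h.tail)

lemma pairwise_rel {L : List (Finset ℕ)} (h : L.Pairwise BlockLt) {A B : Finset ℕ}
    (hA : A ∈ L) (hB : B ∈ L) (hne : A ≠ B) : BlockLt A B ∨ BlockLt B A := by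
  induction L with
  | nil => simp at hA
  | cons C T ih =>
    rcases List.mem_cons.1 hA with rfl | hA' <;> rcases List.mem_cons.1 hB with h2 | hB'
    · exact absurd h2.symm hne
    · exact Or.inl ((List.pairwise_cons.1 h).1 B hB')
    · subst h2; exact Or.inr ((List.pairwise_cons.1 h).1 A hA')
    · exact ih (List.pairwise_cons.1 h).2 hA' hB'

lemma schreier_nonempty : ∀ n, ∀ F ∈ Schreier n, F.Nonempty := by
  intro n
  induction n with
  | zero => rintro F ⟨i, rfl⟩; exact ⟨i, by simp⟩
  | succ n ih =>
    rintro F ⟨L, hL, hmem, -, -, rfl⟩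
    obtain ⟨A, hA⟩ := List.exists_mem_of_ne_nil L hL
    obtain ⟨a, ha⟩ := ih A (hmem A hA)
    exact ⟨a, mem_foldr.2 ⟨A, hA, ha⟩⟩

lemma len_le_of_mem {L : List (Finset ℕ)} (hne : ∀ A ∈ L, A.Nonempty)
    (hch : L.Chain' BlockLt) (hh : ∀ a ∈ L.headI, L.length ≤ a) :
    ∀ a ∈ L.foldr (· ∪ ·) ∅, L.length ≤ a := by
  cases L with
  | nil => simp
  | cons A T =>
    intro a ha
    obtain ⟨B, hB, haB⟩ := mem_foldr.1 ha
    rcases List.mem_cons.1 hB with rfl | hB'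
    · exact hh a haB
    · obtain ⟨b, hb⟩ := hne A (by simp)
      have hlt : BlockLt A B :=
        chain_forall T A (fun C hC => hne C (by simp [hC])) hch B hB'
      exact le_of_lt (lt_of_le_of_lt (hh b hb) (hlt b hb a haB))

lemma schreier_pos {n : ℕ} {F : Finset ℕ} (h : F ∈ Schreier (n + 1)) :
    ∀ a ∈ F, 1 ≤ a := by
  obtain ⟨L, hL, hmem, hch, hh, rfl⟩ := h
  intro a ha
  have := len_le_of_mem (fun A hA => schreier_nonempty n A (hmem A hA)) hch hh a ha
  have : 1 ≤ L.length := List.length_pos_iff.2 hL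
  omega

lemma schreier_up {n : ℕ} {F : Finset ℕ} (h : F ∈ Schreier n) (hpos : ∀ a ∈ F, 1 ≤ a) :
    F ∈ Schreier (n + 1) := by
  refine ⟨[F], by simp, by simpa using h, List.isChain_singleton _, ?_, by simp⟩
  simpa using hpos

lemma schreier_mono {k m : ℕ} (hkm : k ≤ m) {F : Finset ℕ} (h : F ∈ Schreier k)
    (hpos : ∀ a ∈ F, 1 ≤ a) : F ∈ Schreier m := by
  induction m with
  | zero => simpa [Nat.le_zero.1 hkm] using h
  | succ m ih =>
    rcases Nat.lt_or_ge k (m + 1) with hlt | hge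
    · exact schreier_up (ih (Nat.lt_succ_iff.1 hlt)) hpos
    · have : k = m + 1 := le_antisymm hkm hge
      subst this; exact h

lemma foldr_image (L : List (Finset ℕ)) (θ : ℕ → ℕ) :
    (L.map (fun A => A.image θ)).foldr (· ∪ ·) ∅ = (L.foldr (· ∪ ·) ∅).image θ := by
  induction L with
  | nil => simp
  | cons A T ih => simp [ih, Finset.image_union]

lemma schreier_spread : ∀ (n : ℕ) (F : Finset ℕ), F ∈ Schreier n → ∀ θ : ℕ → ℕ,
    (∀ a ∈ F, ∀ b ∈ F, a < b → θ a < θ b) → (∀ a ∈ F, a ≤ θ a) →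
    F.image θ ∈ Schreier n := by
  intro n
  induction n with
  | zero =>
    rintro F ⟨i, rfl⟩ θ _ _
    exact ⟨θ i, by simp⟩
  | succ n ih =>
    rintro F ⟨L, hL, hmem, hch, hh, rfl⟩ θ hmono hle
    have hsub : ∀ A ∈ L, A ⊆ L.foldr (· ∪ ·) ∅ := fun A hA a ha =>
      mem_foldr.2 ⟨A, hA, ha⟩
    refine ⟨L.map (fun A => A.image θ), by simpa using hL, ?_, ?_, ?_, ?_⟩
    · intro B hB
      obtain ⟨A, hA, rfl⟩ := List.mem_map.1 hB
      exact ih A (hmem A hA) θ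
        (fun a ha b hb => hmono a (hsub A hA ha) b (hsub A hA hb))
        (fun a ha => hle a (hsub A hA ha))
    · have hP := chain'_pairwise L (fun A hA => schreier_nonempty n A (hmem A hA)) hch
      refine List.Pairwise.isChain (List.pairwise_map.2 ?_)
      refine hP.imp_of_mem ?_
      intro A B hA hB hAB a' ha' b' hb'
      obtain ⟨a, ha, rfl⟩ := Finset.mem_image.1 ha'
      obtain ⟨b, hb, rfl⟩ := Finset.mem_image.1 hb'
      exact hmono a (hsub A hA ha) b (hsub B hB hb) (hAB a ha b hb)
    · cases L with
      | nil => simp at hL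
      | cons A T =>
        intro a' ha'
        obtain ⟨a, ha, rfl⟩ := Finset.mem_image.1 (by simpa using ha')
        calc (List.map (fun A => A.image θ) (A :: T)).length
            = (A :: T).length := by simp
          _ ≤ a := hh a ha
          _ ≤ θ a := hle a (hsub A (by simp) ha)
    · exact (foldr_image L θ).symm

lemma schreier_hered : ∀ (n : ℕ) (F : Finset ℕ), F ∈ Schreier n →
    ∀ G ⊆ F, G.Nonempty → G ∈ Schreier n := by
  intro n
  induction n with
  | zero =>
    rintro F ⟨i, rfl⟩ G hGF hGne
    exact ⟨i, (Finset.Nonempty.subset_singleton_iff hGne).1 hGF⟩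
  | succ n ih =>
    rintro F ⟨L, hL, hmem, hch, hh, rfl⟩ G hGF hGne
    have hneL : ∀ A ∈ L, A.Nonempty := fun A hA => schreier_nonempty n A (hmem A hA)
    have hL'ne : (L.map (fun A => G ∩ A)).filter (fun B => B ≠ ∅) ≠ [] := by
      obtain ⟨a, ha⟩ := hGne
      obtain ⟨A, hA, haA⟩ := mem_foldr.1 (hGF ha)
      refine List.ne_nil_of_mem (a := G ∩ A) (List.mem_filter.2 ⟨List.mem_map.2 ⟨A, hA, rfl⟩, ?_⟩)
      simp only [decide_eq_true_eq]
      exact Finset.ne_empty_of_mem (Finset.mem_inter.2 ⟨ha, haA⟩)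
    refine ⟨(L.map (fun A => G ∩ A)).filter (fun B => B ≠ ∅), hL'ne, ?_, ?_, ?_, ?_⟩
    · intro B hB
      obtain ⟨hB1, hB2⟩ := List.mem_filter.1 hB
      obtain ⟨A, hA, rfl⟩ := List.mem_map.1 hB1
      simp only [decide_eq_true_eq] at hB2
      exact ih A (hmem A hA) _ Finset.inter_subset_right (Finset.nonempty_iff_ne_empty.2 hB2)
    · have hP := chain'_pairwise L hneL hch
      refine List.Pairwise.isChain (List.Pairwise.sublist List.filter_sublist ?_)
      refine List.pairwise_map.2 (hP.imp ?_)
      intro A B hAB a ha b hb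
      exact hAB a (Finset.mem_inter.1 ha).2 b (Finset.mem_inter.1 hb).2
    · intro a ha
      have hHI := List.mem_filter.1 (headI_mem hL'ne)
      obtain ⟨A, hA, hAe⟩ := List.mem_map.1 hHI.1
      have haF : a ∈ L.foldr (· ∪ ·) ∅ := by
        rw [← hAe] at ha
        exact mem_foldr.2 ⟨A, hA, (Finset.mem_inter.1 ha).2⟩
      calc ((L.map (fun A => G ∩ A)).filter (fun B => B ≠ ∅)).length
          ≤ (L.map (fun A => G ∩ A)).length := List.length_filter_le _ _
        _ = L.length := by simp
        _ ≤ a := len_le_of_mem hneL hch hh a haF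
    · ext a
      rw [mem_foldr]
      constructor
      · intro ha
        obtain ⟨A, hA, haA⟩ := mem_foldr.1 (hGF ha)
        exact ⟨G ∩ A, List.mem_filter.2 ⟨List.mem_map.2 ⟨A, hA, rfl⟩, by
          simp only [decide_eq_true_eq]
          exact Finset.ne_empty_of_mem (Finset.mem_inter.2 ⟨ha, haA⟩)⟩,
          Finset.mem_inter.2 ⟨ha, haA⟩⟩
      · rintro ⟨B, hB, haB⟩
        obtain ⟨hB1, -⟩ := List.mem_filter.1 hB
        obtain ⟨A, hA, rfl⟩ := List.mem_map.1 hB1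
        exact (Finset.mem_inter.1 haB).1

/-- If `Σ_{i∈F} c i e i` is an `(n, ε)`-basic scc and `G ⊆ F` with
    `G ∈ S_k ∗ A_3` for some `k < n`, then `Σ_{i∈G} c i < 3ε`. -/
theorem stmt_2 (n k : ℕ) (hk : k < n) (ε : ℝ) (F : Finset ℕ) (c : ℕ → ℝ)
    (h : IsBasicSCC n ε F c) (G : Finset ℕ) (hGF : G ⊆ F)
    (hG : G ∈ SchreierA3 k) : (∑ i ∈ G, c i) < 3 * ε := by
  obtain ⟨hF, hnn, hsum, hlt⟩ := h
  obtain ⟨m, rfl⟩ : ∃ m, n = m + 1 := ⟨n - 1, by omega⟩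
  have hkm : k ≤ m := Nat.lt_succ_iff.1 hk
  have hFpos : ∀ a ∈ F, 1 ≤ a := schreier_pos hF
  have hε : 0 < ε := by
    obtain ⟨i, hi⟩ := schreier_nonempty _ F hF
    have h1 : ({i} : Finset ℕ) ∈ Schreier (m + 1 - 1) := by
      simp only [Nat.add_sub_cancel]
      exact schreier_mono (Nat.zero_le m) ⟨i, rfl⟩ (by simpa using hFpos i hi)
    have h2 := hlt {i} (by simpa using hi) h1
    simp only [Finset.sum_singleton] at h2
    exact lt_of_le_of_lt (hnn i hi) h2
  obtain ⟨L, hLne, hcard, hch, hM, rfl⟩ := hG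
  have hdo : (do let a ← L; pure ((a : Finset ℕ) : Set ℕ))
      = L.map (fun A : Finset ℕ => (A : Set ℕ)) := by
    simp [bind, List.map_eq_flatMap]
  rw [hdo, List.map_map] at hM
  simp only [Function.comp_def] at hM
  set G := L.foldr (· ∪ ·) ∅ with hGdef
  have hneL : ∀ A ∈ L, A.Nonempty := fun A hA => (hcard A hA).1
  have hP := chain'_pairwise L hneL hch
  set blk : ℕ → Finset ℕ := fun a => (L.filter (fun A => decide (a ∈ A))).headI with hblk
  have hblk1 : ∀ a ∈ G, a ∈ blk a ∧ blk a ∈ L := by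
    intro a ha
    obtain ⟨A, hA, haA⟩ := mem_foldr.1 ha
    have hne : L.filter (fun A => decide (a ∈ A)) ≠ [] :=
      List.ne_nil_of_mem (List.mem_filter.2 ⟨hA, by simpa⟩)
    have h3 := List.mem_filter.1 (headI_mem hne)
    exact ⟨by simpa using h3.2, h3.1⟩
  set φ : ℕ → ℕ := fun a => sInf ((blk a : Finset ℕ) : Set ℕ) with hφ
  have hbne : ∀ a ∈ G, (blk a).Nonempty := fun a ha => ⟨a, (hblk1 a ha).1⟩
  have hφmem : ∀ a ∈ G, φ a ∈ blk a := by
    intro a ha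
    rw [hφ]
    simp only [(hbne a ha).csInf_eq_min']
    exact Finset.min'_mem _ _
  have hφle : ∀ a ∈ G, φ a ≤ a := by
    intro a ha
    rw [hφ]
    simp only [(hbne a ha).csInf_eq_min']
    exact Finset.min'_le _ _ (hblk1 a ha).1
  have hφM : ∀ a ∈ G, φ a ∈ (L.map fun A => sInf ((A : Finset ℕ) : Set ℕ)).toFinset := by
    intro a ha
    exact List.mem_toFinset.2 (List.mem_map.2 ⟨blk a, (hblk1 a ha).2, rfl⟩)
  have hblkeq : ∀ a ∈ G, ∀ b ∈ G, φ a = φ b → blk a = blk b := by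
    intro a ha b hb he
    by_contra hne
    rcases pairwise_rel hP (hblk1 a ha).2 (hblk1 b hb).2 hne with h' | h'
    · exact absurd he (Nat.ne_of_lt (h' _ (hφmem a ha) _ (hφmem b hb)))
    · exact absurd he.symm (Nat.ne_of_lt (h' _ (hφmem b hb) _ (hφmem a ha)))
  set rk : ℕ → ℕ := fun a => ((blk a).filter (· < a)).card with hrk
  have hrk3 : ∀ a ∈ G, rk a < 3 := by
    intro a ha
    have h1 : (blk a).filter (· < a) ⊂ blk a :=
      Finset.filter_ssubset.2 ⟨a, (hblk1 a ha).1, lt_irrefl a⟩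
    have h2 := Finset.card_lt_card h1
    have h3 := (hcard _ (hblk1 a ha).2).2
    show ((blk a).filter (fun x => x < a)).card < 3
    omega
  have hrkmono : ∀ a ∈ G, ∀ b ∈ G, blk a = blk b → a < b → rk a < rk b := by
    intro a ha b hb he hab
    show ((blk a).filter (fun x => x < a)).card < ((blk b).filter (fun x => x < b)).card
    rw [← he]
    apply Finset.card_lt_card
    have hsub : (blk a).filter (fun x => x < a) ⊆ (blk a).filter (fun x => x < b) := by
      intro x hx
      rw [Finset.mem_filter] at hx ⊢
      exact ⟨hx.1, lt_trans hx.2 hab⟩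
    rw [Finset.ssubset_iff_of_subset hsub]
    exact ⟨a, Finset.mem_filter.2 ⟨(hblk1 a ha).1, hab⟩, by simp⟩
  have hinj : ∀ a ∈ G, ∀ b ∈ G, blk a = blk b → rk a = rk b → a = b := by
    intro a ha b hb he hr
    rcases lt_trichotomy a b with h' | h' | h'
    · exact absurd hr (Nat.ne_of_lt (hrkmono a ha b hb he h'))
    · exact h'
    · exact absurd hr.symm (Nat.ne_of_lt (hrkmono b hb a ha he.symm h'))
  -- main per-fiber bound
  have key : ∀ j : ℕ, (∑ i ∈ G.filter (fun a => rk a = j), c i) < ε := by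
    intro j
    set Sj := G.filter (fun a => rk a = j) with hSj
    rcases eq_or_ne Sj ∅ with hS | hS
    · rw [hS]; simpa using hε
    have hSne : Sj.Nonempty := Finset.nonempty_iff_ne_empty.2 hS
    have hSG : Sj ⊆ G := Finset.filter_subset _ _
    have hSF : Sj ⊆ F := hSG.trans hGF
    set θ : ℕ → ℕ := fun mv => (Sj.filter (fun x => φ x = mv)).sup id with hθ
    have filt_eq : ∀ a ∈ Sj, Sj.filter (fun x => φ x = φ a) = {a} := by
      intro a ha
      ext b
      simp only [Finset.mem_filter, Finset.mem_singleton]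
      constructor
      · rintro ⟨hb, he⟩
        have hbG := hSG hb
        have haG := hSG ha
        have hbe := hblkeq b hbG a haG he
        have : rk b = rk a := by
          rw [(Finset.mem_filter.1 hb).2, (Finset.mem_filter.1 ha).2]
        exact hinj b hbG a haG hbe this
      · rintro rfl; exact ⟨ha, rfl⟩
    have hθφ : ∀ a ∈ Sj, θ (φ a) = a := by
      intro a ha
      rw [hθ]
      simp only
      rw [filt_eq a ha, Finset.sup_singleton, id]
    have hM'sub : Sj.image φ ⊆ (L.map fun A => sInf ((A : Finset ℕ) : Set ℕ)).toFinset := by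
      intro x hx
      obtain ⟨a, ha, rfl⟩ := Finset.mem_image.1 hx
      exact hφM a (hSG ha)
    have hM' : Sj.image φ ∈ Schreier k :=
      schreier_hered k _ hM _ hM'sub (hSne.image φ)
    have himg : (Sj.image φ).image θ = Sj := by
      rw [Finset.image_image]
      calc Sj.image (θ ∘ φ) = Sj.image id := Finset.image_congr (fun a ha => hθφ a ha)
        _ = Sj := Finset.image_id
    have hSk : Sj ∈ Schreier k := by
      rw [← himg]
      apply schreier_spread k _ hM' θ
      · intro x hx y hy hxy
        obtain ⟨a, ha, rfl⟩ := Finset.mem_image.1 hx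
        obtain ⟨b, hb, rfl⟩ := Finset.mem_image.1 hy
        rw [hθφ a ha, hθφ b hb]
        have hne : blk a ≠ blk b := by
          intro he
          exact absurd (congrArg (fun A => sInf ((A : Finset ℕ) : Set ℕ)) he)
            (Nat.ne_of_lt hxy)
        rcases pairwise_rel hP (hblk1 a (hSG ha)).2 (hblk1 b (hSG hb)).2 hne with h' | h'
        · exact h' a (hblk1 a (hSG ha)).1 b (hblk1 b (hSG hb)).1
        · exact absurd hxy (not_lt_of_gt (h' _ (hφmem b (hSG hb)) _ (hφmem a (hSG ha))))
      · intro x hx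
        obtain ⟨a, ha, rfl⟩ := Finset.mem_image.1 hx
        rw [hθφ a ha]
        exact hφle a (hSG ha)
    have hSm : Sj ∈ Schreier (m + 1 - 1) := by
      simp only [Nat.add_sub_cancel]
      exact schreier_mono hkm hSk (fun a ha => hFpos a (hSF ha))
    exact hlt Sj hSF hSm
  have hfib := Finset.sum_fiberwise_of_maps_to
    (g := rk) (t := Finset.range 3) (fun a ha => Finset.mem_range.2 (hrk3 a ha)) c
  rw [← hfib]
  rw [Finset.sum_range_succ, Finset.sum_range_succ, Finset.sum_range_one]
  have k0 := key 0; have k1 := key 1; have k2 := key 2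
  linarith
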